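/- For Re α > n/2 and Im z > 0, the integral ∫_{ℝⁿ} (‖ξ‖² - z)^{-α} dξ (Euclidean norm) equals Γ(α)^{-1} ∫₀^∞ (∫_{ℝⁿ} e^{-t(‖ξ‖²-z)} dξ) t^{α-1} dt = π^{n/2} Γ(α - n/2)/Γ(α) · (-z)^{n/2 - α}, and as a function of α it extends meromorphically with simple poles at α ∈ {n/2, n/2 - 1, ..., 1}, with residue at α = k ∈ {1,...,n/2} (for n even) equal to z^{n/2-k} π^{n/2} / ((n/2-k)! Γ(k)). -/

import Mathlib

open Real MeasureTheory Set Filter Topology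


lemma aux_int_rpow_exp {s b : ℝ} (hs : 0 < s) (hb : 0 < b) :
    IntegrableOn (fun t : ℝ => t ^ (s - 1) * Real.exp (-(b * t))) (Ioi 0) := by
  have h0 : IntegrableOn (fun x : ℝ => Real.exp (-x) * x ^ (s - 1)) (Ioi 0) :=
    Real.GammaIntegral_convergent hs
  have h1 : IntegrableOn (fun t : ℝ => Real.exp (-(b * t)) * (b * t) ^ (s - 1)) (Ioi 0) := by
    have := (integrableOn_Ioi_comp_mul_left_iff
      (fun x : ℝ => Real.exp (-x) * x ^ (s - 1)) 0 hb).2 (by simpa using h0)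
    simpa using this
  have h2 := h1.const_mul (b ^ (1 - s))
  apply IntegrableOn.congr_fun h2 ?_ measurableSet_Ioi
  intro t ht
  rw [mem_Ioi] at ht
  dsimp only
  rw [Real.mul_rpow hb.le ht.le]
  rw [show b ^ (1-s) * (Real.exp (-(b*t)) * (b ^ (s-1) * t ^ (s-1)))
      = (b ^ (1-s) * b ^ (s-1)) * (t ^ (s-1) * Real.exp (-(b*t))) by ring,
    ← Real.rpow_add hb]
  norm_num

lemma aux_meas_cpow (a : ℂ) : ContinuousOn (fun t : ℝ => (t : ℂ) ^ (a - 1)) (Ioi 0) := by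
  intro t ht
  rw [mem_Ioi] at ht
  exact (continuousAt_cpow_const (by simp [Complex.mem_slitPlane_iff, ht])).comp
    Complex.continuous_ofReal.continuousAt |>.continuousWithinAt

lemma aux_norm_F {a w : ℂ} {t : ℝ} (ht : 0 < t) :
    ‖(t : ℂ) ^ (a - 1) * Complex.exp (-w * t)‖ = t ^ (a.re - 1) * Real.exp (-(w.re * t)) := by
  rw [norm_mul, Complex.norm_exp,
    Complex.norm_cpow_eq_rpow_re_of_pos ht]
  congr 2
  · simp

lemma aux_integrable_F {a w : ℂ} (ha : 0 < a.re) (hw : 0 < w.re) :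
    IntegrableOn (fun t : ℝ => (t : ℂ) ^ (a - 1) * Complex.exp (-w * t)) (Ioi 0) := by
  apply Integrable.mono' (aux_int_rpow_exp ha hw)
  · exact ((aux_meas_cpow a).mul (Complex.continuous_exp.comp
      (by fun_prop)).continuousOn).aestronglyMeasurable measurableSet_Ioi
  · filter_upwards [ae_restrict_mem measurableSet_Ioi] with t ht
    rw [aux_norm_F ht]

lemma aux_diff_f {a : ℂ} (ha : 0 < a.re) {w₀ : ℂ} (hw₀ : 0 < w₀.re) :
    DifferentiableAt ℂ
      (fun w : ℂ => ∫ t in Ioi (0:ℝ), (t : ℂ) ^ (a - 1) * Complex.exp (-w * t)) w₀ := by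
  set ε : ℝ := w₀.re / 2 with hε
  have hεpos : 0 < ε := by positivity
  have key := hasDerivAt_integral_of_dominated_loc_of_deriv_le (μ := volume.restrict (Ioi 0))
    (F := fun (w : ℂ) (t : ℝ) => (t : ℂ) ^ (a - 1) * Complex.exp (-w * t))
    (F' := fun (w : ℂ) (t : ℝ) => (t : ℂ) ^ (a - 1) * (Complex.exp (-w * t) * -(t : ℂ)))
    (x₀ := w₀) (bound := fun t : ℝ => t ^ a.re * Real.exp (-(ε * t)))
    (s := Metric.ball w₀ ε) (Metric.ball_mem_nhds w₀ hεpos) ?_ ?_ ?_ ?_ ?_ ?_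
  · exact key.2.differentiableAt
  · filter_upwards with w
    exact ((aux_meas_cpow a).mul (Complex.continuous_exp.comp
      (by fun_prop)).continuousOn).aestronglyMeasurable measurableSet_Ioi
  · exact aux_integrable_F ha hw₀
  · apply ContinuousOn.aestronglyMeasurable ?_ measurableSet_Ioi
    exact (aux_meas_cpow a).mul (((Complex.continuous_exp.comp (by fun_prop)).mul
      (by fun_prop)).continuousOn)
  · filter_upwards [ae_restrict_mem measurableSet_Ioi] with t ht w hw
    rw [mem_Ioi] at ht
    have h1 : ‖(t : ℂ) ^ (a - 1) * (Complex.exp (-w * t) * -(t : ℂ))‖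
        = (t ^ (a.re - 1) * Real.exp (-(w.re * t))) * t := by
      rw [show (t : ℂ) ^ (a - 1) * (Complex.exp (-w * t) * -(t : ℂ))
          = ((t : ℂ) ^ (a - 1) * Complex.exp (-w * t)) * (-(t : ℂ)) by ring,
        norm_mul, aux_norm_F ht]
      congr 1
      simp [abs_of_pos ht]
    rw [h1]
    have h2 : t ^ (a.re - 1) * Real.exp (-(w.re * t)) * t = t ^ a.re * Real.exp (-(w.re * t)) := by
      rw [show t ^ (a.re - 1) * Real.exp (-(w.re * t)) * t
          = (t ^ (a.re - 1) * t ^ (1:ℝ)) * Real.exp (-(w.re * t)) by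
        rw [Real.rpow_one]; ring, ← Real.rpow_add ht]
      norm_num
    rw [h2]
    have hre : ε ≤ w.re := by
      have := Complex.abs_re_le_norm (w - w₀)
      have h3 : ‖w - w₀‖ < ε := by simpa [Metric.mem_ball, dist_eq_norm] using hw
      rw [Complex.sub_re] at this
      have : |w.re - w₀.re| ≤ ‖w - w₀‖ := by simpa using this
      have := abs_le.1 this |>.1
      linarith
    have : Real.exp (-(w.re * t)) ≤ Real.exp (-(ε * t)) := by
      apply Real.exp_le_exp.2
      nlinarith
    have h4 : (0:ℝ) ≤ t ^ a.re := Real.rpow_nonneg ht.le _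
    exact mul_le_mul_of_nonneg_left this h4
  · have h := aux_int_rpow_exp (s := a.re + 1) (b := ε) (by linarith) hεpos
    exact (by simpa using h : IntegrableOn (fun t : ℝ => t ^ a.re * Real.exp (-(ε * t))) (Ioi 0))
  · filter_upwards [ae_restrict_mem measurableSet_Ioi] with t ht w hw
    have h1 : HasDerivAt (fun w : ℂ => -w * (t : ℂ)) (-(t : ℂ)) w := by
      simpa using ((hasDerivAt_id w).neg.mul_const (t : ℂ))
    exact (h1.cexp).const_mul _

lemma laplace_cpow {a : ℂ} (ha : 0 < a.re) {w : ℂ} (hw : 0 < w.re) :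
    ∫ t in Ioi (0:ℝ), (t : ℂ) ^ (a - 1) * Complex.exp (-w * t)
      = Complex.Gamma a * w ^ (-a) := by
  set U : Set ℂ := {w : ℂ | 0 < w.re} with hU
  have hUopen : IsOpen U := isOpen_lt continuous_const Complex.continuous_re
  set f : ℂ → ℂ := fun w => ∫ t in Ioi (0:ℝ), (t : ℂ) ^ (a - 1) * Complex.exp (-w * t) with hf
  set g : ℂ → ℂ := fun w => Complex.Gamma a * w ^ (-a) with hg
  have hfa : AnalyticOnNhd ℂ f U := by
    apply DifferentiableOn.analyticOnNhd ?_ hUopen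
    intro w hw'
    exact (aux_diff_f ha hw').differentiableWithinAt
  have hga : AnalyticOnNhd ℂ g U := by
    apply DifferentiableOn.analyticOnNhd ?_ hUopen
    intro w hw'
    refine DifferentiableAt.differentiableWithinAt ?_
    exact ((differentiableAt_id.cpow (differentiableAt_const _)
      (Or.inl hw')).const_mul _)
  have hreal : ∀ r : ℝ, 0 < r → f r = g r := by
    intro r hr
    have := Complex.integral_cpow_mul_exp_neg_mul_Ioi ha hr
    rw [hf, hg]
    simp only
    simp only [neg_mul]
    rw [this, one_div, Complex.inv_cpow _ _ (by
      rw [Complex.arg_ofReal_of_nonneg hr.le]; exact fun h => pi_ne_zero h.symm),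
      ← Complex.cpow_neg, mul_comm]
  have hfreq : ∃ᶠ z in 𝓝[≠] (1 : ℂ), f z = g z := by
    have htend : Tendsto (fun n : ℕ => (1 + (n+1:ℝ)⁻¹ : ℂ)) atTop (𝓝[≠] (1 : ℂ)) := by
      apply tendsto_nhdsWithin_of_tendsto_nhds_of_eventually_within
      · have : Tendsto (fun n : ℕ => ((n:ℝ)+1)⁻¹) atTop (𝓝 0) := by
          exact tendsto_one_div_add_atTop_nhds_zero_nat.congr (by intro n; rw [one_div])
        have := ((Complex.continuous_ofReal.tendsto 0).comp this).const_add (1 : ℂ)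
        simpa using this
      · filter_upwards with n
        simp only [mem_compl_iff, mem_singleton_iff]
        intro h
        have : ((n+1:ℝ)⁻¹ : ℂ) = 0 := by
          have := sub_eq_zero.2 h.symm
          simpa using this.symm
        simp only [Complex.ofReal_eq_zero, inv_eq_zero] at this
        linarith
    apply htend.frequently
    apply Filter.Frequently.of_forall
    intro n
    have h1 : (0:ℝ) < 1 + (n+1:ℝ)⁻¹ := by positivity
    have := hreal _ h1
    simpa using this
  have := hfa.eqOn_of_preconnected_of_frequently_eq hga
    ((convex_halfSpace_re_gt 0).isPreconnected) (by norm_num [hU]) hfreq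
  exact this hw

lemma aux_finrank (p : ℕ) :
    (Module.finrank ℝ (EuclideanSpace ℝ (Fin (2 * p)))) = 2 * p := by
  simp [finrank_euclideanSpace]

lemma gauss_cint (p : ℕ) (z : ℂ) {t : ℝ} (ht : 0 < t) :
    (∫ ξ : EuclideanSpace ℝ (Fin (2 * p)),
        Complex.exp (-(t : ℂ) * (((‖ξ‖ ^ 2 : ℝ) : ℂ) - z)))
      = (π : ℂ) ^ p / (t : ℂ) ^ p * Complex.exp ((t : ℂ) * z) := by
  have h1 : ∀ ξ : EuclideanSpace ℝ (Fin (2 * p)),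
      Complex.exp (-(t : ℂ) * (((‖ξ‖ ^ 2 : ℝ) : ℂ) - z))
        = Complex.exp ((t : ℂ) * z) * Complex.exp (-(t : ℂ) * (‖ξ‖:ℂ) ^ 2) := by
    intro ξ
    rw [← Complex.exp_add]
    push_cast
    ring_nf
  simp_rw [h1]
  rw [integral_const_mul, GaussianFourier.integral_cexp_neg_mul_sq_norm
    (V := EuclideanSpace ℝ (Fin (2 * p))) (by simpa using ht)]
  rw [aux_finrank p]
  have h2 : ((2 * p : ℕ) / 2 : ℂ) = (p : ℕ) := by push_cast; ring
  rw [h2, Complex.cpow_natCast, div_pow]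
  ring

lemma gauss_rint (p : ℕ) {t : ℝ} (ht : 0 < t) :
    (∫ ξ : EuclideanSpace ℝ (Fin (2 * p)), Real.exp (-t * ‖ξ‖ ^ 2))
      = π ^ p / t ^ p := by
  rw [GaussianFourier.integral_rexp_neg_mul_sq_norm
    (V := EuclideanSpace ℝ (Fin (2 * p))) ht, aux_finrank p]
  have h2 : ((2 * p : ℕ) / 2 : ℝ) = (p : ℕ) := by push_cast; ring
  rw [h2, Real.rpow_natCast, div_pow]

lemma part1 (p : ℕ) (hp : 0 < p) (z : ℂ) (hz : z.re < 0) (α : ℂ) (hα : (p : ℝ) < α.re) :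
    (∫ ξ : EuclideanSpace ℝ (Fin (2 * p)), (((‖ξ‖ ^ 2 : ℝ) : ℂ) - z) ^ (-α)) =
        (1 / Complex.Gamma α) *
          ∫ t in Ioi (0 : ℝ),
            (∫ ξ : EuclideanSpace ℝ (Fin (2 * p)),
              Complex.exp (-(t : ℂ) * (((‖ξ‖ ^ 2 : ℝ) : ℂ) - z))) * (t : ℂ) ^ (α - 1) ∧
      (∫ ξ : EuclideanSpace ℝ (Fin (2 * p)), (((‖ξ‖ ^ 2 : ℝ) : ℂ) - z) ^ (-α)) =
        (π : ℂ) ^ p * Complex.Gamma (α - (p : ℂ)) / Complex.Gamma α *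
          (-z) ^ ((p : ℂ) - α) := by
  have hp1 : (1 : ℝ) ≤ (p : ℝ) := by exact_mod_cast hp
  have hα0 : 0 < α.re := by linarith
  have hΓ : Complex.Gamma α ≠ 0 := Complex.Gamma_ne_zero_of_re_pos hα0
  set E := EuclideanSpace ℝ (Fin (2 * p))
  set F : ℝ → E → ℂ := fun t ξ =>
    (t : ℂ) ^ (α - 1) * Complex.exp (-(t : ℂ) * (((‖ξ‖ ^ 2 : ℝ) : ℂ) - z)) with hF
  -- pointwise identity
  have hwre : ∀ ξ : E, 0 < (((‖ξ‖ ^ 2 : ℝ) : ℂ) - z).re := by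
    intro ξ
    simp only [Complex.sub_re, Complex.ofReal_re]
    nlinarith [sq_nonneg ‖ξ‖]
  have keyA : ∀ ξ : E, (((‖ξ‖ ^ 2 : ℝ) : ℂ) - z) ^ (-α)
      = (1 / Complex.Gamma α) * ∫ t in Ioi (0:ℝ), F t ξ := by
    intro ξ
    have := laplace_cpow hα0 (hwre ξ)
    simp only [hF]
    simp_rw [show ∀ t : ℝ, -(t : ℂ) * (((‖ξ‖ ^ 2 : ℝ) : ℂ) - z)
        = -(((‖ξ‖ ^ 2 : ℝ) : ℂ) - z) * t from fun t => by ring]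
    rw [this]
    field_simp
  -- integrability of the uncurried function
  have hmeas : AEStronglyMeasurable (Function.uncurry F)
      ((volume.restrict (Ioi (0:ℝ))).prod (volume : Measure E)) := by
    rw [← Measure.restrict_univ (μ := (volume : Measure E)), Measure.prod_restrict]
    apply ContinuousOn.aestronglyMeasurable ?_ (measurableSet_Ioi.prod MeasurableSet.univ)
    apply ContinuousOn.mul
    · exact (aux_meas_cpow α).comp continuous_fst.continuousOn (fun x hx => hx.1)
    · apply Continuous.continuousOn
      apply Complex.continuous_exp.comp
      fun_prop
  have hInt : Integrable (Function.uncurry F)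
      ((volume.restrict (Ioi (0:ℝ))).prod (volume : Measure E)) := by
    rw [integrable_prod_iff hmeas]
    constructor
    · filter_upwards [ae_restrict_mem measurableSet_Ioi] with t ht
      rw [mem_Ioi] at ht
      have hb : (0:ℝ) < ((t : ℂ)).re := by simpa using ht
      have h0 : Integrable (fun ξ : E =>
          Complex.exp (-(t:ℂ) * (‖ξ‖:ℂ)^2 + 0 * (inner ℝ (0 : E) ξ : ℝ))) :=
        GaussianFourier.integrable_cexp_neg_mul_sq_norm_add hb 0 0
      have h1 : Integrable (fun ξ : E =>
          Complex.exp ((t:ℂ) * z) * Complex.exp (-(t:ℂ) * (‖ξ‖:ℂ)^2 + 0 * (inner ℝ (0 : E) ξ : ℝ))) :=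
        h0.const_mul _
      have h2 : Integrable (fun ξ : E =>
          Complex.exp (-(t:ℂ) * (((‖ξ‖ ^ 2 : ℝ) : ℂ) - z))) := by
        apply h1.congr
        filter_upwards with ξ
        rw [← Complex.exp_add]
        push_cast
        ring_nf
      simpa [Function.uncurry, hF] using h2.const_mul ((t:ℂ) ^ (α - 1))
    · have hG : IntegrableOn
          (fun t : ℝ => (π ^ p) * (t ^ (α.re - (p:ℝ) - 1) * Real.exp (-((-z.re) * t))))
          (Ioi (0:ℝ)) :=
        (aux_int_rpow_exp (s := α.re - (p:ℝ)) (b := -z.re)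
          (by linarith) (by linarith)).const_mul (π ^ p)
      apply IntegrableOn.congr_fun hG ?_ measurableSet_Ioi
      intro t ht
      rw [mem_Ioi] at ht
      have hnorm : ∀ ξ : E, ‖F t ξ‖
          = t ^ (α.re - 1) * (Real.exp (t * z.re) * Real.exp (-t * ‖ξ‖ ^ 2)) := by
        intro ξ
        simp only [hF]
        have hre : (-(t:ℂ) * (((‖ξ‖ ^ 2 : ℝ) : ℂ) - z)).re = t * z.re + -(t * ‖ξ‖ ^ 2) := by
          rw [show -(t:ℂ) = ((-t : ℝ) : ℂ) by push_cast; ring, Complex.re_ofReal_mul,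
            Complex.sub_re, Complex.ofReal_re]
          ring
        rw [norm_mul, Complex.norm_exp,
          Complex.norm_cpow_eq_rpow_re_of_pos ht, hre, ← Real.exp_add]
        congr 1
        simp
      simp only [Function.uncurry_apply_pair]
      simp_rw [hnorm]
      rw [integral_const_mul, integral_const_mul, gauss_rint p ht]
      have htp : t ^ p ≠ 0 := pow_ne_zero _ ht.ne'
      have hrp : t ^ (α.re - (p:ℝ) - 1) = t ^ (α.re - 1) / t ^ p := by
        rw [← Real.rpow_natCast t p, ← Real.rpow_sub ht]
        congr 1
        ring
      rw [show (-((-z.re) * t)) = t * z.re by ring, hrp]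
      field_simp
  -- Fubini
  have swap := MeasureTheory.integral_integral_swap (f := F) hInt
  have step1 : (∫ ξ : E, (((‖ξ‖ ^ 2 : ℝ) : ℂ) - z) ^ (-α))
      = (1 / Complex.Gamma α) * ∫ t in Ioi (0:ℝ), ∫ ξ : E, F t ξ := by
    simp_rw [keyA]
    rw [integral_const_mul, ← swap]
  have step2 : (∫ t in Ioi (0:ℝ), ∫ ξ : E, F t ξ)
      = ∫ t in Ioi (0:ℝ),
          (∫ ξ : E, Complex.exp (-(t : ℂ) * (((‖ξ‖ ^ 2 : ℝ) : ℂ) - z))) * (t : ℂ) ^ (α - 1) := by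
    apply setIntegral_congr_fun measurableSet_Ioi
    intro t _
    simp only [hF]
    rw [integral_const_mul, mul_comm]
  have step3 : (∫ t in Ioi (0:ℝ),
        (∫ ξ : E, Complex.exp (-(t : ℂ) * (((‖ξ‖ ^ 2 : ℝ) : ℂ) - z))) * (t : ℂ) ^ (α - 1))
      = (π : ℂ) ^ p * (Complex.Gamma (α - (p:ℂ)) * (-z) ^ (-(α - (p:ℂ)))) := by
    rw [show (∫ t in Ioi (0:ℝ),
        (∫ ξ : E, Complex.exp (-(t : ℂ) * (((‖ξ‖ ^ 2 : ℝ) : ℂ) - z))) * (t : ℂ) ^ (α - 1))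
        = ∫ t in Ioi (0:ℝ),
            (π : ℂ) ^ p * ((t : ℂ) ^ ((α - (p:ℂ)) - 1) * Complex.exp (-(-z) * t)) from ?_]
    · rw [integral_const_mul, laplace_cpow (by simp; linarith) (by simp; linarith)]
    · apply setIntegral_congr_fun measurableSet_Ioi
      intro t ht
      rw [mem_Ioi] at ht
      have ht0 : (t : ℂ) ≠ 0 := by exact_mod_cast ht.ne'
      have htp : (t : ℂ) ^ p ≠ 0 := pow_ne_zero _ ht0
      dsimp only
      rw [gauss_cint p z ht]
      have e1 : ((t:ℂ)) ^ ((α - (p:ℂ)) - 1) = (t:ℂ) ^ (α - 1) / (t:ℂ) ^ p := by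
        rw [show (α - (p:ℂ)) - 1 = (α - 1) - (p:ℂ) by ring, Complex.cpow_sub _ _ ht0,
          Complex.cpow_natCast]
      rw [e1, show (-(-z) * (t:ℂ)) = (t:ℂ) * z by ring]
      field_simp
  refine ⟨step1.trans (by rw [step2]), ?_⟩
  rw [step1, step2, step3, neg_sub]
  field_simp

lemma gamma_shift (m : ℕ) : ∀ s : ℂ, (∀ j : ℕ, j ≤ m → s + j ≠ 0) →
    Complex.Gamma (s + (m + 1 : ℕ)) = (∏ j ∈ Finset.range (m + 1), (s + j)) * Complex.Gamma s := by
  induction m with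
  | zero =>
    intro s hs
    have h0 : s ≠ 0 := by simpa using hs 0 le_rfl
    simp [Complex.Gamma_add_one s h0]
  | succ n ih =>
    intro s hs
    have h1 : s + (n + 1 : ℕ) ≠ 0 := hs (n + 1) le_rfl
    have h2 : Complex.Gamma (s + (n + 1 + 1 : ℕ)) = (s + (n + 1 : ℕ)) *
        Complex.Gamma (s + (n + 1 : ℕ)) := by
      rw [show (s + (n + 1 + 1 : ℕ)) = (s + (n + 1 : ℕ)) + 1 by push_cast; ring]
      exact Complex.Gamma_add_one _ h1
    rw [h2, ih s (fun j hj => hs j (hj.trans (Nat.le_succ n))),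
      Finset.prod_range_succ (f := fun j : ℕ => s + (j : ℂ)) (n + 1)]
    ring

lemma prod_at_negm (m : ℕ) :
    (∏ j ∈ Finset.range m, (-(m : ℂ) + j)) = (-1) ^ m * (m.factorial : ℂ) := by
  have h1 : ∀ j ∈ Finset.range m, (-(m : ℂ) + j) = -((m - j : ℕ) : ℂ) := by
    intro j hj
    rw [Finset.mem_range] at hj
    push_cast [Nat.cast_sub hj.le]
    ring
  have h2 : ∀ j ∈ Finset.range m, -((m - j : ℕ) : ℂ) = (-1) * ((m - j : ℕ) : ℂ) := by
    intro j _; ring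
  rw [Finset.prod_congr rfl h1, Finset.prod_congr rfl h2, Finset.prod_mul_distrib,
    Finset.prod_const, Finset.card_range]
  congr 1
  rw [← Nat.cast_prod]
  congr 1
  rw [← Finset.prod_range_add_one_eq_factorial m, ← Finset.prod_range_reflect]
  apply Finset.prod_congr rfl
  intro j hj
  rw [Finset.mem_range] at hj
  omega

lemma gamma_residue (m : ℕ) :
    Tendsto (fun s : ℂ => (s + m) * Complex.Gamma s) (𝓝[≠] (-(m : ℂ)))
      (𝓝 ((-1) ^ m / (m.factorial : ℂ))) := by
  set g : ℂ → ℂ := fun s => Complex.Gamma (s + (m + 1 : ℕ)) / ∏ j ∈ Finset.range m, (s + j)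
    with hg
  have hne1 : ∀ n : ℕ, (1 : ℂ) ≠ -n := by
    intro n h
    have := congrArg Complex.re h
    simp at this
    nlinarith [Nat.cast_nonneg (α := ℝ) n]
  have hprodne : (∏ j ∈ Finset.range m, (-(m : ℂ) + j)) ≠ 0 := by
    rw [prod_at_negm]
    exact mul_ne_zero (pow_ne_zero _ (by norm_num))
      (Nat.cast_ne_zero.2 m.factorial_ne_zero)
  have hcont : ContinuousAt g (-(m : ℂ)) := by
    apply ContinuousAt.div
    · have hΓc : ContinuousAt Complex.Gamma (-(m : ℂ) + (m + 1 : ℕ)) := by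
        rw [show -(m : ℂ) + (m + 1 : ℕ) = 1 by push_cast; ring]
        exact (Complex.differentiableAt_Gamma 1 hne1).continuousAt
      exact ContinuousAt.comp (g := Complex.Gamma) (f := fun s : ℂ => s + ((m + 1 : ℕ) : ℂ))
        hΓc ((continuous_id.add continuous_const).continuousAt)
    · exact (Continuous.continuousAt (by continuity))
    · exact hprodne
  have hval : g (-(m : ℂ)) = (-1) ^ m / (m.factorial : ℂ) := by
    rw [hg]
    simp only
    rw [show -(m : ℂ) + (m + 1 : ℕ) = 1 by push_cast; ring, Complex.Gamma_one, prod_at_negm]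
    rw [one_div, mul_inv, div_eq_mul_inv]
    congr 1
    rw [eq_comm, ← inv_pow, inv_neg, inv_one]
  have hev : ∀ᶠ s in 𝓝[≠] (-(m : ℂ)), (s + m) * Complex.Gamma s = g s := by
    have h1 : ∀ᶠ s : ℂ in 𝓝 (-(m : ℂ)), ∀ j ∈ Finset.range m, s + (j : ℂ) ≠ 0 := by
      rw [Finset.eventually_all]
      intro j hj
      rw [Finset.mem_range] at hj
      have hne : -(m : ℂ) + j ≠ 0 := by
        intro h
        have : (j : ℂ) = (m : ℂ) := by linear_combination h
        exact hj.ne (by exact_mod_cast this)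
      exact ((continuous_id.add continuous_const).continuousAt).eventually_ne hne
    filter_upwards [eventually_nhdsWithin_of_eventually_nhds h1,
      self_mem_nhdsWithin] with s hs hs'
    simp only [mem_compl_iff, mem_singleton_iff] at hs'
    have hsm : s + m ≠ 0 := by
      intro h
      exact hs' (eq_neg_of_add_eq_zero_left h)
    have hall : ∀ j : ℕ, j ≤ m → s + j ≠ 0 := by
      intro j hj
      rcases lt_or_eq_of_le hj with h | h
      · exact hs j (Finset.mem_range.2 h)
      · rw [h]; exact hsm
    rw [hg]
    simp only
    rw [gamma_shift m s hall, Finset.prod_range_succ]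
    have hprod : (∏ j ∈ Finset.range m, (s + (j : ℂ))) ≠ 0 :=
      Finset.prod_ne_zero_iff.2 (fun j hj => hs j hj)
    field_simp
  have htd : Tendsto g (𝓝[≠] (-(m : ℂ))) (𝓝 ((-1) ^ m / (m.factorial : ℂ))) := by
    rw [← hval]
    exact hcont.tendsto.mono_left (nhdsWithin_le_nhds (s := {-(m : ℂ)}ᶜ))
  exact Tendsto.congr' (hev.mono fun _ h => h.symm) htd

lemma part2 (p : ℕ) (z : ℂ) (hz : z.re < 0) (k : ℕ) (hk1 : 1 ≤ k) (hkp : k ≤ p) :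
    Tendsto (fun α : ℂ => (α - (k : ℂ)) *
        ((π : ℂ) ^ p * Complex.Gamma (α - (p : ℂ)) / Complex.Gamma α *
          (-z) ^ ((p : ℂ) - α)))
      (𝓝[≠] (k : ℂ))
      (𝓝 (z ^ (p - k) * (π : ℂ) ^ p /
        (((p - k).factorial : ℂ) * Complex.Gamma (k : ℂ)))) := by
  set m : ℕ := p - k with hmdef
  have hm : ((k : ℂ)) + (m : ℂ) = (p : ℂ) := by
    rw [hmdef]
    push_cast [Nat.cast_sub hkp]
    ring
  have hz0 : -z ≠ 0 := by
    intro h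
    rw [neg_eq_zero] at h
    rw [h] at hz
    simp at hz
  have hΓk : Complex.Gamma (k : ℂ) ≠ 0 := by
    apply Complex.Gamma_ne_zero_of_re_pos
    simp only [Complex.natCast_re]
    exact_mod_cast hk1.trans_lt' zero_lt_one
  have h1 : Tendsto (fun α : ℂ => α - (p : ℂ)) (𝓝[≠] (k : ℂ)) (𝓝[≠] (-(m : ℂ))) := by
    apply tendsto_nhdsWithin_of_tendsto_nhds_of_eventually_within
    · have h0 : Tendsto (fun α : ℂ => α - (p : ℂ)) (𝓝 (k : ℂ)) (𝓝 ((k : ℂ) - (p : ℂ))) :=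
        ((continuous_id.sub continuous_const).tendsto _)
      rw [show (k : ℂ) - (p : ℂ) = -(m : ℂ) by linear_combination hm] at h0
      exact h0.mono_left nhdsWithin_le_nhds
    · filter_upwards [self_mem_nhdsWithin] with α hα
      simp only [mem_compl_iff, mem_singleton_iff] at hα ⊢
      intro h
      apply hα
      have : α - (p:ℂ) = (k:ℂ) - (p:ℂ) := by rw [h]; linear_combination -hm
      linear_combination this
  have h2 := (gamma_residue m).comp h1
  have h3 : Tendsto (fun α : ℂ => (π : ℂ) ^ p / Complex.Gamma α * (-z) ^ ((p : ℂ) - α))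
      (𝓝[≠] (k : ℂ))
      (𝓝 ((π : ℂ) ^ p / Complex.Gamma (k : ℂ) * (-z) ^ ((p : ℂ) - (k : ℂ)))) := by
    have hc : ContinuousAt
        (fun α : ℂ => (π : ℂ) ^ p / Complex.Gamma α * (-z) ^ ((p : ℂ) - α)) (k : ℂ) := by
      apply ContinuousAt.mul
      · apply ContinuousAt.div continuousAt_const
          (Complex.differentiableAt_Gamma _ ?_).continuousAt hΓk
        intro n h
        have := congrArg Complex.re h
        simp only [Complex.natCast_re, Complex.neg_re] at this
        have h1 : (1:ℝ) ≤ (k:ℝ) := by exact_mod_cast hk1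
        have h2 : (0:ℝ) ≤ (n:ℝ) := Nat.cast_nonneg n
        linarith
      · exact ((continuous_const.sub continuous_id).continuousAt).const_cpow (Or.inl hz0)
    exact hc.tendsto.mono_left nhdsWithin_le_nhds
  have total := h2.mul h3
  have heq : ∀ α : ℂ,
      ((fun s : ℂ => (s + (m : ℂ)) * Complex.Gamma s) ∘ fun α : ℂ => α - (p : ℂ)) α *
        ((π : ℂ) ^ p / Complex.Gamma α * (-z) ^ ((p : ℂ) - α))
      = (α - (k : ℂ)) * ((π : ℂ) ^ p * Complex.Gamma (α - (p : ℂ)) / Complex.Gamma α *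
          (-z) ^ ((p : ℂ) - α)) := by
    intro α
    simp only [Function.comp_apply]
    rw [show α - (p : ℂ) + (m : ℂ) = α - (k : ℂ) by linear_combination hm]
    ring
  have total2 := total.congr heq
  convert total2 using 2
  rw [show ((p : ℂ) - (k : ℂ)) = ((m : ℕ) : ℂ) by linear_combination -hm,
    Complex.cpow_natCast]
  have hzz : ((-1 : ℂ)) ^ m * (-z) ^ m = z ^ m := by
    rw [← mul_pow, neg_one_mul, neg_neg]
  have hfac : ((m.factorial : ℂ)) ≠ 0 := Nat.cast_ne_zero.2 m.factorial_ne_zero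
  field_simp
  ring_nf
  rw [mul_comm m 2, pow_mul]
  norm_num

/-- For `n = 2p` even, `Re z < 0` and `Re α > n/2`, the integral
`∫_{ℝⁿ} (‖ξ‖² - z)^{-α} dξ` equals `Γ(α)⁻¹ ∫₀^∞ (∫_{ℝⁿ} e^{-t(‖ξ‖²-z)} dξ) t^{α-1} dt`
and equals `π^{n/2} Γ(α - n/2)/Γ(α) · (-z)^{n/2-α}`; the latter closed form is the
meromorphic continuation in `α`, with simple poles at `α ∈ {n/2, …, 1}`, and for
`k ∈ {1,…,n/2}` the residue at `α = k` is `z^{n/2-k} π^{n/2}/((n/2-k)! Γ(k))`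
(stated as the limit of `(α - k)` times the function along `α → k`). -/
theorem stmt7 (p : ℕ) (hp : 0 < p) (z : ℂ) (hz : z.re < 0) :
    (∀ α : ℂ, (p : ℝ) < α.re →
      (∫ ξ : EuclideanSpace ℝ (Fin (2 * p)), (((‖ξ‖ ^ 2 : ℝ) : ℂ) - z) ^ (-α)) =
          (1 / Complex.Gamma α) *
            ∫ t in Ioi (0 : ℝ),
              (∫ ξ : EuclideanSpace ℝ (Fin (2 * p)),
                Complex.exp (-(t : ℂ) * (((‖ξ‖ ^ 2 : ℝ) : ℂ) - z))) * (t : ℂ) ^ (α - 1) ∧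
        (∫ ξ : EuclideanSpace ℝ (Fin (2 * p)), (((‖ξ‖ ^ 2 : ℝ) : ℂ) - z) ^ (-α)) =
          (π : ℂ) ^ p * Complex.Gamma (α - (p : ℂ)) / Complex.Gamma α *
            (-z) ^ ((p : ℂ) - α)) ∧
    (∀ k : ℕ, 1 ≤ k → k ≤ p →
      Tendsto (fun α : ℂ => (α - (k : ℂ)) *
          ((π : ℂ) ^ p * Complex.Gamma (α - (p : ℂ)) / Complex.Gamma α *
            (-z) ^ ((p : ℂ) - α)))
        (𝓝[≠] (k : ℂ))
        (𝓝 (z ^ (p - k) * (π : ℂ) ^ p / (((p - k).factorial : ℂ) * Complex.Gamma (k : ℂ))))) := by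
  exact ⟨fun α hα => part1 p hp z hz α hα, fun k hk1 hkp => part2 p z hz k hk1 hkp⟩
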